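/- The optimal value function dominates every stationary policy's value function: if V* : S → ℝ satisfies LV* = V*, then for every stationary policy π : S → A and every state s ∈ S, V*(s) ≥ V^π(s), where V^π is the unique fixed point of the policy operator L^π. -/
import Mathlib


/-- The Bellman operator of a finite MDP with transition probabilities `P`,
reward `R`, and discount factor `γ`:
`(L V)(s) = R s + γ * max_{a} ∑_{s'} P s a s' * V s'`. -/
noncomputable def bellmanOp {S A : Type*} [Fintype S] [Fintype A] [Nonempty A]
    (P : S → A → S → ℝ) (R : S → ℝ) (γ : ℝ) (V : S → ℝ) : S → ℝ :=
  fun s => R s + γ * Finset.univ.sup' Finset.univ_nonempty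
    (fun a : A => ∑ s' : S, P s a s' * V s')

/-- The policy operator of a stationary policy `π : S → A`:
`(L^π V)(s) = R s + γ * ∑_{s'} P s (π s) s' * V s'`. -/
noncomputable def policyOp {S A : Type*} [Fintype S]
    (P : S → A → S → ℝ) (R : S → ℝ) (γ : ℝ) (π : S → A) (V : S → ℝ) : S → ℝ :=
  fun s => R s + γ * ∑ s' : S, P s (π s) s' * V s'

/-- The optimal value function dominates every stationary policy's value
function: if `L V* = V*` and `V^π` is the (unique) fixed point of the policy
operator `L^π`, then `V*(s) ≥ V^π(s)` for every state `s`. -/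
theorem optimal_value_dominates_policy_value
    {S A : Type*} [Fintype S] [Nonempty S] [Fintype A] [Nonempty A]
    (P : S → A → S → ℝ) (R : S → ℝ) (γ : ℝ) (hγ0 : 0 < γ) (hγ1 : γ < 1)
    (hP0 : ∀ s a s', 0 ≤ P s a s') (hP1 : ∀ s a, ∑ s' : S, P s a s' = 1)
    (Vstar : S → ℝ) (hfix : bellmanOp P R γ Vstar = Vstar)
    (π : S → A) (Vpi : S → ℝ) (hpifix : policyOp P R γ π Vpi = Vpi) :
    ∀ s : S, Vpi s ≤ Vstar s := by

  -- Let M be the maximum of Vpi - Vstar over states.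
  set f : S → ℝ := fun s => Vpi s - Vstar s with hf
  obtain ⟨s0, -, hs0⟩ := Finset.exists_max_image (Finset.univ : Finset S) f Finset.univ_nonempty
  have key : ∀ s, f s ≤ γ * f s0 := by
    intro s
    have hVs : Vstar s = bellmanOp P R γ Vstar s := by rw [hfix]
    have hVp : Vpi s = policyOp P R γ π Vpi s := by rw [hpifix]
    have hle : policyOp P R γ π Vstar s ≤ bellmanOp P R γ Vstar s := by
      unfold policyOp bellmanOp
      gcongr
      exact Finset.le_sup' (fun a : A => ∑ s' : S, P s a s' * Vstar s') (Finset.mem_univ (π s))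
    have h1 : f s ≤ policyOp P R γ π Vpi s - policyOp P R γ π Vstar s := by
      simp only [hf]
      rw [hVs, ← hVp]
      linarith
    have h2 : policyOp P R γ π Vpi s - policyOp P R γ π Vstar s
        = γ * ∑ s' : S, P s (π s) s' * f s' := by
      simp only [policyOp, hf, mul_sub, Finset.sum_sub_distrib, mul_sub]
      ring
    rw [h2] at h1
    refine h1.trans ?_
    have : ∑ s' : S, P s (π s) s' * f s' ≤ ∑ s' : S, P s (π s) s' * f s0 := by
      apply Finset.sum_le_sum
      intro i _
      exact mul_le_mul_of_nonneg_left (hs0 i (Finset.mem_univ i)) (hP0 _ _ _)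
    have h3 : ∑ s' : S, P s (π s) s' * f s0 = f s0 := by
      rw [← Finset.sum_mul, hP1, one_mul]
    nlinarith [this, h3]
  have hM : f s0 ≤ 0 := by
    have := key s0
    nlinarith
  intro s
  have := (hs0 s (Finset.mem_univ s)).trans hM
  simpa [hf] using this
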